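/- arXiv:1501.02925 — 3 statements merged into one kernel-verified Lean document; each statement's English description precedes it below -/
import Mathlib

section
/- Subject reduction holds for the guarded lambda calculus: if the closed term t has type A and t reduces (in zero or more call-by-name steps) to u, then u has type A. -/
/-- Terms of the guarded lambda calculus `gλ`, with de Bruijn indices.
In `prev σ.t` and `box σ.t` the explicit substitution `σ` is a list of terms for
the de Bruijn variables `0, ..., n-1` of `t` (which are all of `t`'s free variables). -/
inductive Tm : Type
  | var : ℕ → Tm
  | unit : Tm
  | zero : Tm
  | succ : Tm → Tm
  | pair : Tm → Tm → Tm
  | proj : Bool → Tm → Tm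
  | lam : Tm → Tm
  | app : Tm → Tm → Tm
  | fold : Tm → Tm
  | unfold : Tm → Tm
  | next : Tm → Tm
  | prev : List Tm → Tm → Tm
  | box : List Tm → Tm → Tm
  | unbox : Tm → Tm
  | ap : Tm → Tm → Tm

namespace Tm

/-- Renaming of free variables. -/
def rename (f : ℕ → ℕ) : Tm → Tm
  | var n => var (f n)
  | unit => unit
  | zero => zero
  | succ t => succ (t.rename f)
  | pair t u => pair (t.rename f) (u.rename f)
  | proj d t => proj d (t.rename f)
  | lam t => lam (t.rename fun n => match n with | 0 => 0 | n + 1 => f n + 1)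
  | app t u => app (t.rename f) (u.rename f)
  | fold t => fold (t.rename f)
  | unfold t => unfold (t.rename f)
  | next t => next (t.rename f)
  | prev ts t => prev (ts.attach.map fun x => x.1.rename f) t
  | box ts t => box (ts.attach.map fun x => x.1.rename f) t
  | unbox t => unbox (t.rename f)
  | ap t u => ap (t.rename f) (u.rename f)
decreasing_by
  all_goals simp_wf
  all_goals try omega
  all_goals (have := List.sizeOf_lt_of_mem x.2; omega)

/-- Capture-avoiding simultaneous substitution.  The bodies of `prev` and `box`
are closed under their explicit substitutions, so only the lists are substituted. -/
def subst (σ : ℕ → Tm) : Tm → Tm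
  | var n => σ n
  | unit => unit
  | zero => zero
  | succ t => succ (t.subst σ)
  | pair t u => pair (t.subst σ) (u.subst σ)
  | proj d t => proj d (t.subst σ)
  | lam t => lam (t.subst fun n => match n with | 0 => var 0 | n + 1 => (σ n).rename Nat.succ)
  | app t u => app (t.subst σ) (u.subst σ)
  | fold t => fold (t.subst σ)
  | unfold t => unfold (t.subst σ)
  | next t => next (t.subst σ)
  | prev ts t => prev (ts.attach.map fun x => x.1.subst σ) t
  | box ts t => box (ts.attach.map fun x => x.1.subst σ) t
  | unbox t => unbox (t.subst σ)
  | ap t u => ap (t.subst σ) (u.subst σ)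
decreasing_by
  all_goals simp_wf
  all_goals try omega
  all_goals (have := List.sizeOf_lt_of_mem x.2; omega)

/-- Single substitution `t[u/x]` (for de Bruijn variable `0`). -/
def subst1 (u : Tm) (t : Tm) : Tm :=
  t.subst fun n => match n with | 0 => u | n + 1 => var n

/-- Simultaneous substitution `t[t⃗/x⃗]` of a list of terms for variables `0,...,n-1`. -/
def substList (ts : List Tm) (t : Tm) : Tm :=
  t.subst fun n => if h : n < ts.length then ts[n] else var (n - ts.length)

end Tm

/-- Numerals `succⁿ zero`. -/
inductive Numeral : Tm → Prop
  | zero : Numeral .zero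
  | succ {t} : Numeral t → Numeral (.succ t)

/-- Values of `gλ`. -/
inductive Value : Tm → Prop
  | unit : Value .unit
  | num {t} : Numeral t → Value t
  | pair (t u : Tm) : Value (.pair t u)
  | lam (t : Tm) : Value (.lam t)
  | fold (t : Tm) : Value (.fold t)
  | box (ts : List Tm) (t : Tm) : Value (.box ts t)
  | next (t : Tm) : Value (.next t)

/-- The reduction rules of `gλ`. -/
inductive Head : Tm → Tm → Prop
  | proj {d t₁ t₂} : Head (.proj d (.pair t₁ t₂)) (cond d t₁ t₂)
  | beta {t u} : Head (.app (.lam t) u) (Tm.subst1 u t)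
  | unfoldFold {t} : Head (.unfold (.fold t)) t
  | prevSubst {ts t} : ts ≠ [] → Head (.prev ts t) (.prev [] (Tm.substList ts t))
  | prevNext {t} : Head (.prev [] (.next t)) t
  | unboxBox {ts t} : Head (.unbox (.box ts t)) (Tm.substList ts t)
  | apNext {t u} : Head (.ap (.next t) (.next u)) (.next (.app t u))

/-- Call-by-name reduction: the reduction rules applied inside evaluation contexts
`E ::= · | succ E | πd E | E t | unfold E | prev E | unbox E | E ⊛ t | v ⊛ E`. -/
inductive Step : Tm → Tm → Prop
  | head {t u} : Head t u → Step t u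
  | succ {t u} : Step t u → Step (.succ t) (.succ u)
  | proj {d t u} : Step t u → Step (.proj d t) (.proj d u)
  | app {t u s} : Step t u → Step (.app t s) (.app u s)
  | unfold {t u} : Step t u → Step (.unfold t) (.unfold u)
  | prev {t u} : Step t u → Step (.prev [] t) (.prev [] u)
  | unbox {t u} : Step t u → Step (.unbox t) (.unbox u)
  | apL {t u s} : Step t u → Step (.ap t s) (.ap u s)
  | apR {v t u} : Value v → Step t u → Step (.ap v t) (.ap v u)


/-- Types of the guarded lambda calculus, with de Bruijn type variables.
`mu A` binds type variable `0` in `A`. -/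
inductive Ty : Type
  | tvar : ℕ → Ty
  | unit : Ty
  | nat : Ty
  | prod : Ty → Ty → Ty
  | arr : Ty → Ty → Ty
  | mu : Ty → Ty
  | later : Ty → Ty
  | box : Ty → Ty

namespace Ty

def rename (f : ℕ → ℕ) : Ty → Ty
  | tvar n => tvar (f n)
  | unit => unit
  | nat => nat
  | prod A B => prod (A.rename f) (B.rename f)
  | arr A B => arr (A.rename f) (B.rename f)
  | mu A => mu (A.rename fun n => match n with | 0 => 0 | n + 1 => f n + 1)
  | later A => later (A.rename f)
  | box A => box (A.rename f)

def subst (σ : ℕ → Ty) : Ty → Ty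
  | tvar n => σ n
  | unit => unit
  | nat => nat
  | prod A B => prod (A.subst σ) (B.subst σ)
  | arr A B => arr (A.subst σ) (B.subst σ)
  | mu A => mu (A.subst fun n => match n with | 0 => tvar 0 | n + 1 => (σ n).rename Nat.succ)
  | later A => later (A.subst σ)
  | box A => box (A.subst σ)

/-- `A[B/α]` where `α` is the type variable `0`. -/
def subst0 (B : Ty) (A : Ty) : Ty :=
  A.subst fun n => match n with | 0 => B | n + 1 => tvar n

/-- Constant types: every occurrence of `later` is beneath an occurrence of `box`. -/
def IsConst : Ty → Prop
  | tvar _ => True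
  | unit => True
  | nat => True
  | prod A B => A.IsConst ∧ B.IsConst
  | arr A B => A.IsConst ∧ B.IsConst
  | mu A => A.IsConst
  | later _ => False
  | box _ => True

end Ty

/-- The typing judgement of the guarded lambda calculus. -/
inductive HasTy : List Ty → Tm → Ty → Prop
  | var {Γ n A} : Γ[n]? = some A → HasTy Γ (.var n) A
  | unit {Γ} : HasTy Γ .unit .unit
  | zero {Γ} : HasTy Γ .zero .nat
  | succ {Γ t} : HasTy Γ t .nat → HasTy Γ (.succ t) .nat
  | pair {Γ t u A B} : HasTy Γ t A → HasTy Γ u B → HasTy Γ (.pair t u) (.prod A B)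
  | proj {Γ d t A B} : HasTy Γ t (.prod A B) → HasTy Γ (.proj d t) (cond d A B)
  | lam {Γ t A B} : HasTy (A :: Γ) t B → HasTy Γ (.lam t) (.arr A B)
  | app {Γ t u A B} : HasTy Γ t (.arr A B) → HasTy Γ u A → HasTy Γ (.app t u) B
  | fold {Γ t A} : HasTy Γ t (Ty.subst0 (.mu A) A) → HasTy Γ (.fold t) (.mu A)
  | unfold {Γ t A} : HasTy Γ t (.mu A) → HasTy Γ (.unfold t) (Ty.subst0 (.mu A) A)
  | next {Γ t A} : HasTy Γ t A → HasTy Γ (.next t) (.later A)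
  | prev {Γ} {ts : List Tm} {t} {As : List Ty} {A} : (∀ B ∈ As, B.IsConst) →
      HasTy As t (.later A) → ts.length = As.length →
      (∀ (k : ℕ) (h1 : k < ts.length) (h2 : k < As.length), HasTy Γ ts[k] As[k]) →
      HasTy Γ (.prev ts t) A
  | box {Γ} {ts : List Tm} {t} {As : List Ty} {A} : (∀ B ∈ As, B.IsConst) →
      HasTy As t A → ts.length = As.length →
      (∀ (k : ℕ) (h1 : k < ts.length) (h2 : k < As.length), HasTy Γ ts[k] As[k]) →
      HasTy Γ (.box ts t) (.box A)
  | unbox {Γ t A} : HasTy Γ t (.box A) → HasTy Γ (.unbox t) A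
  | ap {Γ t u A B} : HasTy Γ t (.later (.arr A B)) → HasTy Γ u (.later A) →
      HasTy Γ (.ap t u) (.later B)

/-- Zero-or-more call-by-name reduction steps. -/
def Steps : Tm → Tm → Prop := Relation.ReflTransGen Step

theorem hasTy_rename {Γ t A} (h : HasTy Γ t A) :
    ∀ {Δ : List Ty} {f : ℕ → ℕ}, (∀ n B, Γ[n]? = some B → Δ[f n]? = some B) →
      HasTy Δ (t.rename f) A := by
  induction h with
  | var h => intro Δ f hf; simpa [Tm.rename] using HasTy.var (hf _ _ h)
  | unit => intro Δ f hf; simpa [Tm.rename] using HasTy.unit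
  | zero => intro Δ f hf; simpa [Tm.rename] using HasTy.zero
  | succ _ ih => intro Δ f hf; simpa [Tm.rename] using HasTy.succ (ih hf)
  | pair _ _ ih1 ih2 => intro Δ f hf; simpa [Tm.rename] using HasTy.pair (ih1 hf) (ih2 hf)
  | proj _ ih => intro Δ f hf; simpa [Tm.rename] using HasTy.proj (ih hf)
  | lam _ ih =>
    intro Δ f hf
    simp only [Tm.rename]
    refine HasTy.lam (ih ?_)
    intro n B hn
    match n with
    | 0 => simpa using hn
    | n + 1 => simp only [List.getElem?_cons_succ] at hn ⊢; exact hf _ _ hn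
  | app _ _ ih1 ih2 => intro Δ f hf; simpa [Tm.rename] using HasTy.app (ih1 hf) (ih2 hf)
  | fold _ ih => intro Δ f hf; simpa [Tm.rename] using HasTy.fold (ih hf)
  | unfold _ ih => intro Δ f hf; simpa [Tm.rename] using HasTy.unfold (ih hf)
  | next _ ih => intro Δ f hf; simpa [Tm.rename] using HasTy.next (ih hf)
  | prev hc hb hlen hts ih ihts =>
    intro Δ f hf
    simp only [Tm.rename]
    refine HasTy.prev hc hb (by simpa using hlen) ?_
    intro k h1 h2
    simp only [List.getElem_map, List.getElem_attach]
    exact ihts k (by simpa using h1) h2 hf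
  | box hc hb hlen hts ih ihts =>
    intro Δ f hf
    simp only [Tm.rename]
    refine HasTy.box hc hb (by simpa using hlen) ?_
    intro k h1 h2
    simp only [List.getElem_map, List.getElem_attach]
    exact ihts k (by simpa using h1) h2 hf
  | unbox _ ih => intro Δ f hf; simpa [Tm.rename] using HasTy.unbox (ih hf)
  | ap _ _ ih1 ih2 => intro Δ f hf; simpa [Tm.rename] using HasTy.ap (ih1 hf) (ih2 hf)

theorem hasTy_subst {Γ t A} (h : HasTy Γ t A) :
    ∀ {Δ : List Ty} {σ : ℕ → Tm}, (∀ n B, Γ[n]? = some B → HasTy Δ (σ n) B) →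
      HasTy Δ (t.subst σ) A := by
  induction h with
  | var h => intro Δ σ hσ; simpa [Tm.subst] using hσ _ _ h
  | unit => intro Δ σ hσ; simpa [Tm.subst] using HasTy.unit
  | zero => intro Δ σ hσ; simpa [Tm.subst] using HasTy.zero
  | succ _ ih => intro Δ σ hσ; simpa [Tm.subst] using HasTy.succ (ih hσ)
  | pair _ _ ih1 ih2 => intro Δ σ hσ; simpa [Tm.subst] using HasTy.pair (ih1 hσ) (ih2 hσ)
  | proj _ ih => intro Δ σ hσ; simpa [Tm.subst] using HasTy.proj (ih hσ)
  | lam _ ih =>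
    intro Δ σ hσ
    simp only [Tm.subst]
    refine HasTy.lam (ih ?_)
    intro n B hn
    match n with
    | 0 => simp at hn; subst hn; exact HasTy.var (by simp)
    | n + 1 =>
      simp only [List.getElem?_cons_succ] at hn
      exact hasTy_rename (hσ _ _ hn) (by intro m C hm; simpa using hm)
  | app _ _ ih1 ih2 => intro Δ σ hσ; simpa [Tm.subst] using HasTy.app (ih1 hσ) (ih2 hσ)
  | fold _ ih => intro Δ σ hσ; simpa [Tm.subst] using HasTy.fold (ih hσ)
  | unfold _ ih => intro Δ σ hσ; simpa [Tm.subst] using HasTy.unfold (ih hσ)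
  | next _ ih => intro Δ σ hσ; simpa [Tm.subst] using HasTy.next (ih hσ)
  | prev hc hb hlen hts ih ihts =>
    intro Δ σ hσ
    simp only [Tm.subst]
    refine HasTy.prev hc hb (by simpa using hlen) ?_
    intro k h1 h2
    simp only [List.getElem_map, List.getElem_attach]
    exact ihts k (by simpa using h1) h2 hσ
  | box hc hb hlen hts ih ihts =>
    intro Δ σ hσ
    simp only [Tm.subst]
    refine HasTy.box hc hb (by simpa using hlen) ?_
    intro k h1 h2
    simp only [List.getElem_map, List.getElem_attach]
    exact ihts k (by simpa using h1) h2 hσ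
  | unbox _ ih => intro Δ σ hσ; simpa [Tm.subst] using HasTy.unbox (ih hσ)
  | ap _ _ ih1 ih2 => intro Δ σ hσ; simpa [Tm.subst] using HasTy.ap (ih1 hσ) (ih2 hσ)

theorem hasTy_subst1 {Γ t u A B} (ht : HasTy (A :: Γ) t B) (hu : HasTy Γ u A) :
    HasTy Γ (Tm.subst1 u t) B := by
  refine hasTy_subst ht ?_
  intro n C hn
  match n with
  | 0 => simp at hn; subst hn; exact hu
  | n + 1 => simp only [List.getElem?_cons_succ] at hn; exact HasTy.var hn

theorem hasTy_substList {Γ} {ts : List Tm} {As : List Ty} {t A}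
    (h : HasTy As t A) (hlen : ts.length = As.length)
    (hts : ∀ (k : ℕ) (h1 : k < ts.length) (h2 : k < As.length), HasTy Γ ts[k] As[k]) :
    HasTy Γ (Tm.substList ts t) A := by
  refine hasTy_subst h ?_
  intro n B hn
  have hlt : n < As.length := by
    by_contra hc
    simp [List.getElem?_eq_none (le_of_not_gt hc)] at hn
  have hB : As[n] = B := by
    have := List.getElem?_eq_getElem hlt
    rw [this] at hn; exact Option.some_injective _ hn
  have hn' : n < ts.length := hlen ▸ hlt
  rw [dif_pos hn']
  exact hB ▸ hts n hn' hlt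

theorem head_ty {t u A} (h : Head t u) (ht : HasTy [] t A) : HasTy [] u A := by
  cases h with
  | proj =>
    cases ht with
    | proj hp =>
      cases hp with
      | pair h1 h2 =>
        rename_i d _ _ _ _
        cases d
        · exact h2
        · exact h1
  | beta =>
    cases ht with
    | app hf ha => cases hf with
      | lam hb => exact hasTy_subst1 hb ha
  | unfoldFold =>
    cases ht with
    | unfold hf => cases hf with
      | fold hb => exact hb
  | prevSubst hne =>
    cases ht with
    | prev hc hb hlen hts =>
      refine HasTy.prev (As := []) (by simp) ?_ rfl (by simp)
      exact hasTy_substList hb hlen hts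
  | prevNext =>
    cases ht with
    | prev hc hb hlen hts =>
      obtain rfl : _ = ([] : List Ty) := List.length_eq_zero_iff.mp hlen.symm
      cases hb with
      | next h => exact h
  | unboxBox =>
    cases ht with
    | unbox hb => cases hb with
      | box hc h hlen hts => exact hasTy_substList h hlen hts
  | apNext =>
    cases ht with
    | ap h1 h2 =>
      cases h1 with
      | next h1 => cases h2 with
        | next h2 => exact HasTy.next (HasTy.app h1 h2)

theorem step_ty {t u} (h : Step t u) : ∀ {A}, HasTy [] t A → HasTy [] u A := by
  induction h with
  | head h => intro A ht; exact head_ty h ht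
  | succ _ ih => intro A ht; cases ht with | succ h => exact HasTy.succ (ih h)
  | proj _ ih => intro A ht; cases ht with | proj h => exact HasTy.proj (ih h)
  | app _ ih => intro A ht; cases ht with | app h1 h2 => exact HasTy.app (ih h1) h2
  | unfold _ ih => intro A ht; cases ht with | unfold h => exact HasTy.unfold (ih h)
  | prev _ ih =>
    intro A ht
    cases ht with
    | prev hc hb hlen hts =>
      obtain rfl : _ = ([] : List Ty) := List.length_eq_zero_iff.mp hlen.symm
      exact HasTy.prev (by simp) (ih hb) rfl (by simp)
  | unbox _ ih => intro A ht; cases ht with | unbox h => exact HasTy.unbox (ih h)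
  | apL _ ih => intro A ht; cases ht with | ap h1 h2 => exact HasTy.ap (ih h1) h2
  | apR _ _ ih => intro A ht; cases ht with | ap h1 h2 => exact HasTy.ap h1 (ih h2)

/-- Subject reduction: a closed well-typed term keeps its type under reduction. -/
theorem subject_reduction {t u : Tm} {A : Ty} (ht : HasTy [] t A) (hr : Steps t u) :
    HasTy [] u A := by
  induction hr with
  | refl => exact ht
  | tail _ h ih => exact step_ty h ih
end

section
/- Products, non-empty coproducts, and exponentials of total and inhabited objects in the topos of trees are total and inhabited: if X and Y have all components non-empty and all restriction maps surjective, then so do X × Y, X + Y, and Y^X. -/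
/-- An object of the topos of trees `S`. -/
structure Obj where
  X : ℕ → Type
  r : ∀ i, X (i + 1) → X i

def IsHom (A B : Obj) (f : ∀ i, A.X i → B.X i) : Prop :=
  ∀ i a, B.r i (f (i + 1) a) = f i (A.r i a)

/-- Global elements `1 → A` of an object `A`. -/
def GS (A : Obj) : Type :=
  { x : ∀ i, A.X i // ∀ i, A.r i (x (i + 1)) = x i }

/-- Carrier of `▶A`: `(▶A)₁ = {*}` and `(▶A)ᵢ₊₁ = Aᵢ`. -/
def LaterX (A : Obj) : ℕ → Type
  | 0 => PUnit
  | j + 1 => A.X j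

def LaterR (A : Obj) : ∀ i, LaterX A (i + 1) → LaterX A i
  | 0 => fun _ => ⟨⟩
  | j + 1 => A.r j

/-- The later functor `▶` on objects. -/
def Later (A : Obj) : Obj := ⟨LaterX A, LaterR A⟩

/-- The natural transformation `next : X → ▶X`. -/
def nextMap (A : Obj) : ∀ i, A.X i → LaterX A i
  | 0 => fun _ => ⟨⟩
  | j + 1 => A.r j

def prodObj (A B : Obj) : Obj where
  X i := A.X i × B.X i
  r i p := (A.r i p.1, B.r i p.2)

/-- The (pointwise) binary coproduct. -/
def sumObj (A B : Obj) : Obj where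
  X i := A.X i ⊕ B.X i
  r i := Sum.map (A.r i) (B.r i)

/-- The exponential `B^A`. -/
def expObj (A B : Obj) : Obj where
  X i := { g : ∀ j, j ≤ i → A.X j → B.X j //
    ∀ j (h : j + 1 ≤ i) (a : A.X (j + 1)),
      B.r j (g (j + 1) h a) = g j (Nat.le_of_succ_le h) (A.r j a) }
  r i g := ⟨fun j hj a => g.1 j (Nat.le_succ_of_le hj) a,
    fun j hj a => g.2 j (Nat.le_succ_of_le hj) a⟩

/-- Total and inhabited: all components non-empty, all restrictions surjective. -/
def TI (A : Obj) : Prop :=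
  (∀ i, Nonempty (A.X i)) ∧ (∀ i, Function.Surjective (A.r i))

/-- A coherent family of elements of `Y`, built by lifting along surjections. -/
noncomputable def gsOf (Y : Obj) (hY : TI Y) : ∀ i, Y.X i
  | 0 => Classical.choice (hY.1 0)
  | i + 1 => Function.surjInv (hY.2 i) (gsOf Y hY i)

theorem gsOf_spec (Y : Obj) (hY : TI Y) (i : ℕ) :
    Y.r i (gsOf Y hY (i + 1)) = gsOf Y hY i :=
  Function.surjInv_eq (hY.2 i) _

/-- Products, (non-empty binary) coproducts, and exponentials of total and
inhabited objects are total and inhabited. -/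
theorem TI_closed_under_prod_sum_exp (X Y : Obj) (hX : TI X) (hY : TI Y) :
    TI (prodObj X Y) ∧ TI (sumObj X Y) ∧ TI (expObj X Y) := by
  obtain ⟨hX1, hX2⟩ := hX
  obtain ⟨hY1, hY2⟩ := hY
  refine ⟨⟨fun i => ⟨⟨Classical.choice (hX1 i), Classical.choice (hY1 i)⟩⟩, ?_⟩,
    ⟨fun i => ⟨Sum.inl (Classical.choice (hX1 i))⟩, ?_⟩,
    ⟨fun i => ?_, fun i => ?_⟩⟩
  · rintro i ⟨a, b⟩
    obtain ⟨a', ha⟩ := hX2 i a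
    obtain ⟨b', hb⟩ := hY2 i b
    exact ⟨⟨a', b'⟩, by simp [prodObj, ha, hb]⟩
  · rintro i (a | b)
    · obtain ⟨a', ha⟩ := hX2 i a
      exact ⟨Sum.inl a', by simp [sumObj, ha]⟩
    · obtain ⟨b', hb⟩ := hY2 i b
      exact ⟨Sum.inr b', by simp [sumObj, hb]⟩
  · -- nonempty exponential components: constant functions at a global element of Y
    exact ⟨⟨fun j _ _ => gsOf Y ⟨hY1, hY2⟩ j,
      fun j _ _ => gsOf_spec Y ⟨hY1, hY2⟩ j⟩⟩
  · -- surjectivity of exponential restrictions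
    rintro ⟨g, hg⟩
    set new : X.X (i + 1) → Y.X (i + 1) :=
      fun a => Function.surjInv (hY2 i) (g i (le_refl i) (X.r i a)) with hnew
    have hnewspec : ∀ a, Y.r i (new a) = g i (le_refl i) (X.r i a) :=
      fun a => Function.surjInv_eq (hY2 i) _
    refine ⟨⟨fun j hj =>
        if h' : j ≤ i then g j h' else ((by omega : i + 1 = j) ▸ new), ?_⟩, ?_⟩
    · intro j hj a
      dsimp only
      by_cases h' : j + 1 ≤ i
      · rw [dif_pos h', dif_pos (Nat.le_of_succ_le h')]
        exact hg j h' a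
      · have hji : j = i := by omega
        subst hji
        rw [dif_neg h', dif_pos (le_refl j)]
        exact hnewspec a
    · apply Subtype.ext
      funext j hj a
      dsimp only [expObj]
      exact dif_pos hj ▸ rfl
end

section
/- In the internal logic of the topos of trees, later distributes over binary propositional connectives: for propositions φ, ψ, ▷(φ ∧ ψ) ⟺ ▷φ ∧ ▷ψ, ▷(φ ∨ ψ) ⟺ ▷φ ∨ ▷ψ, and ▷(φ ⇒ ψ) ⟺ (▷φ ⇒ ▷ψ), where ▷ : Ω → Ω is the operation on the subobject classifier sending a sieve/truth-stage downward by one (▷p holds at stage i+1 iff p holds at stage i, and ▷p always holds at stage 1). -/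
/- The subobject classifier `Ω` of the topos of trees has `Ωᵢ = {0, 1, ..., i}`
(for stages `i ≥ 1`): a truth value at stage `i` is the number `k ≤ i` of initial
stages at which the proposition holds.  On this linear Heyting algebra the
lattice operations are: conjunction is `min`, disjunction is `max`, and Heyting
implication is `p ⇒ q = i` if `p ≤ q`, and `q` otherwise.  The later modality is
`▷ᵢ(k) = min (k+1) i`. -/

/-- The later modality on truth values at stage `i`. -/
def laterO (i k : ℕ) : ℕ := min (k + 1) i

/-- Conjunction of truth values. -/
def andO (p q : ℕ) : ℕ := min p q

/-- Disjunction of truth values. -/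
def orO (p q : ℕ) : ℕ := max p q

/-- Heyting implication of truth values at stage `i`. -/
def impO (i p q : ℕ) : ℕ := if p ≤ q then i else q

/-- In the internal logic of the topos of trees, later distributes over the binary
propositional connectives: `▷(φ ∧ ψ) ⟺ ▷φ ∧ ▷ψ`, `▷(φ ∨ ψ) ⟺ ▷φ ∨ ▷ψ`, and
`▷(φ ⇒ ψ) ⟺ (▷φ ⇒ ▷ψ)`, i.e. the corresponding truth values agree at every
stage. -/
theorem later_distributes_over_connectives (i p q : ℕ) (hi : 1 ≤ i)
    (hp : p ≤ i) (hq : q ≤ i) :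
    laterO i (andO p q) = andO (laterO i p) (laterO i q) ∧
    laterO i (orO p q) = orO (laterO i p) (laterO i q) ∧
    laterO i (impO i p q) = impO i (laterO i p) (laterO i q) := by
  unfold laterO andO orO impO
  split_ifs <;> omega
end
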